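/- Let p be an odd prime. The holomorph Hol((C_p × C_p) ⋊ C_2) contains a normal subgroup isomorphic to the elementary abelian group C_p × C_p × C_p × C_p of order p⁴, which is contained in every Sylow p-subgroup of Hol((C_p × C_p) ⋊ C_2). -/

import Mathlib

open Equiv

/-- The left regular representation of a group `N` in `Equiv.Perm N`. -/
def leftReg (N : Type*) [Group N] : N →* Equiv.Perm N :=
  MulAction.toPermHom N N

/-- The holomorph of `N`: the normalizer of the image of the left regular
representation inside the symmetric group on `N`. -/
def Hol (N : Type*) [Group N] : Subgroup (Equiv.Perm N) :=
  Subgroup.normalizer (MonoidHom.range (leftReg N))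

/-- A subgroup of `Equiv.Perm N` is semiregular if every non-identity element
has no fixed point on `N`. -/
def IsSemiregular {N : Type*} [Group N] (H : Subgroup (Equiv.Perm N)) : Prop :=
  ∀ g ∈ H, g ≠ 1 → ∀ x : N, g x ≠ x

/-- A subgroup of `Equiv.Perm N` is regular if its natural action on `N` is
simply transitive. -/
def IsRegularSubgroup {N : Type*} [Group N] (G : Subgroup (Equiv.Perm N)) : Prop :=
  ∀ x y : N, ∃! g : G, (g : Equiv.Perm N) x = y

/-- The cyclic group of order `n` (written multiplicatively). -/
abbrev Cyc (n : ℕ) := Multiplicative (ZMod n)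

/-- The group `C_p × C_p` (written multiplicatively). -/
abbrev Vp (p : ℕ) := Multiplicative (ZMod p × ZMod p)

/-- The action of `C_2` on `C_p × C_p` in which the generator acts by inversion. -/
def actC2 (p : ℕ) : Multiplicative (ZMod 2) →* MulAut (Vp p) where
  toFun c := if Multiplicative.toAdd c = 0 then 1 else MulEquiv.inv (Vp p)
  map_one' := by simp
  map_mul' a b := by
    have h : ∀ x : ZMod 2, x = 0 ∨ x = 1 := by decide
    have hmul : Multiplicative.toAdd (a * b) = Multiplicative.toAdd a + Multiplicative.toAdd b := rfl
    have h11 : (1 : ZMod 2) + 1 = 0 := by decide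
    have hinv : (1 : MulAut (Vp p)) = MulEquiv.inv (Vp p) * MulEquiv.inv (Vp p) := by
      refine MulEquiv.ext fun x => ?_
      show x = (x⁻¹)⁻¹
      simp
    rcases h (Multiplicative.toAdd a) with ha | ha <;> rcases h (Multiplicative.toAdd b) with hb | hb <;>
      simp [hmul, ha, hb, h11, hinv]

section Aux

variable {N : Type*} [Group N]

/-- The right regular representation. -/
def rreg (N : Type*) [Group N] : N →* Equiv.Perm N where
  toFun n := Equiv.mulRight n⁻¹
  map_one' := by ext x; simp
  map_mul' a b := by ext x; simp [mul_assoc]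

lemma leftReg_apply (n x : N) : leftReg N n x = n * x := rfl

lemma rreg_apply (n x : N) : rreg N n x = x * n⁻¹ := rfl

lemma leftReg_injective : Function.Injective (leftReg N) := by
  intro a b h
  have := congrArg (fun f => (f : Equiv.Perm N) 1) h
  simpa [leftReg_apply] using this

lemma rreg_injective : Function.Injective (rreg N) := by
  intro a b h
  have := congrArg (fun f => (f : Equiv.Perm N) 1) h
  simpa [rreg_apply] using this

lemma commute_leftReg_rreg (a b : N) : Commute (leftReg N a) (rreg N b) := by
  apply Equiv.ext
  intro x
  simp [Equiv.Perm.mul_apply, leftReg_apply, rreg_apply, mul_assoc]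

lemma leftReg_mem_Hol (n : N) : leftReg N n ∈ Hol N :=
  Subgroup.le_normalizer ⟨n, rfl⟩

lemma conj_fix (b : N) (n : N) :
    rreg N b * leftReg N n * (rreg N b)⁻¹ = leftReg N n := by
  rw [← (commute_leftReg_rreg n b).eq, mul_inv_cancel_right]

lemma rreg_mem_Hol (b : N) : rreg N b ∈ Hol N := by
  rw [Hol, Subgroup.mem_normalizer_iff]
  intro h
  constructor
  · rintro ⟨n, rfl⟩
    exact ⟨n, (conj_fix b n).symm⟩
  · rintro ⟨n, hn⟩
    refine ⟨n, ?_⟩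
    have h2 : (rreg N b)⁻¹ * leftReg N n * rreg N b = leftReg N n := by
      conv_lhs => rw [← conj_fix b n]
      group
    calc leftReg N n = (rreg N b)⁻¹ * leftReg N n * rreg N b := h2.symm
      _ = (rreg N b)⁻¹ * (rreg N b * h * (rreg N b)⁻¹) * rreg N b := by rw [← hn]
      _ = h := by group

/-- Conjugation by an element of the holomorph sends left translations to left
translations. -/
lemma conj_leftReg {g : Equiv.Perm N} (hg : g ∈ Hol N) (n : N) :
    ∃ m, g * leftReg N n * g⁻¹ = leftReg N m := by
  have := (Subgroup.mem_normalizer_iff.mp hg (leftReg N n)).mp ⟨n, rfl⟩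
  obtain ⟨m, hm⟩ := this
  exact ⟨m, hm.symm⟩

lemma conj_leftReg' {g : Equiv.Perm N} (hg : g ∈ Hol N) (n : N) :
    ∃ m, g⁻¹ * leftReg N n * g = leftReg N m := by
  have := (Subgroup.mem_normalizer_iff.mp hg (g⁻¹ * leftReg N n * g)).mpr
    ⟨n, by group⟩
  obtain ⟨m, hm⟩ := this
  exact ⟨m, hm.symm⟩

/-- Conjugation by an element of the holomorph sends right translations to right
translations (since the right translations are the centralizer of the left ones). -/
lemma conj_rreg {g : Equiv.Perm N} (hg : g ∈ Hol N) (b : N) :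
    ∃ c, g * rreg N b * g⁻¹ = rreg N c := by
  set π := g * rreg N b * g⁻¹ with hπ
  have hcomm : ∀ n : N, π * leftReg N n = leftReg N n * π := by
    intro n
    obtain ⟨m, hm⟩ := conj_leftReg' hg n
    calc π * leftReg N n
        = g * (rreg N b * leftReg N m) * g⁻¹ := by rw [← hm, hπ]; group
      _ = g * (leftReg N m * rreg N b) * g⁻¹ := by rw [(commute_leftReg_rreg m b).eq]
      _ = leftReg N n * π := by rw [← hm, hπ]; group
  refine ⟨(π 1)⁻¹, ?_⟩
  apply Equiv.ext
  intro x
  have := congrArg (fun f : Equiv.Perm N => f 1) (hcomm x)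
  simp only [Equiv.Perm.mul_apply, leftReg_apply, mul_one] at this
  show π x = x * ((π 1)⁻¹)⁻¹
  rw [inv_inv]
  exact this

end Aux

/-- The semidirect product `(C_p × C_p) ⋊ C_2`, where the generator of `C_2`
acts by inversion. -/
abbrev GD (p : ℕ) := SemidirectProduct (Vp p) (Multiplicative (ZMod 2)) (actC2 p)

section Main

open SemidirectProduct Multiplicative

variable (p : ℕ)

/-- The parametrization of the subgroup `F = λ(V) ρ(V)`. -/
def phiF : Vp p × Vp p →* Equiv.Perm (GD p) :=
  MonoidHom.noncommCoprod ((leftReg (GD p)).comp inl) ((rreg (GD p)).comp inl)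
    (fun _ _ => commute_leftReg_rreg _ _)

lemma phiF_apply (v w : Vp p) :
    phiF p (v, w) = leftReg (GD p) (inl v) * rreg (GD p) (inl w) := rfl

lemma vp_pow_eq_one (v : Vp p) : v ^ p = 1 := by
  have h2 : Multiplicative.toAdd (v ^ p) = 0 := by
    rw [toAdd_pow]
    ext <;> simp [nsmul_eq_mul, ZMod.natCast_self]
  have h3 : Multiplicative.toAdd (v ^ p) = Multiplicative.toAdd (1 : Vp p) := by
    rw [h2]; rfl
  exact Multiplicative.toAdd.injective h3

lemma vp_sq_eq_one (hp : p.Prime) (hodd : Odd p) (v : Vp p) (h : v * v = 1) : v = 1 := by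
  haveI := Fact.mk hp
  have h2 : Multiplicative.toAdd v + Multiplicative.toAdd v = 0 := by
    simpa using congrArg Multiplicative.toAdd h
  have h3 : ((2 : ℕ) : ZMod p) ≠ 0 := by
    intro hc
    have hdvd := (ZMod.natCast_eq_zero_iff 2 p).mp hc
    have := Nat.le_of_dvd (by norm_num) hdvd
    interval_cases p
    · exact absurd hp (by norm_num)
    · exact absurd hp (by norm_num)
    · simp [Nat.odd_iff] at hodd
  have key : ∀ a : ZMod p, a + a = 0 → a = 0 := by
    intro a ha
    have h4 : ((2 : ℕ) : ZMod p) * a = 0 := by push_cast; rw [two_mul]; exact ha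
    rcases mul_eq_zero.mp h4 with h | h
    · exact absurd h h3
    · exact h
  have h5 : Multiplicative.toAdd v = 0 := by
    have e1 := congrArg Prod.fst h2
    have e2 := congrArg Prod.snd h2
    exact Prod.ext (key _ e1) (key _ e2)
  have h6 : Multiplicative.toAdd v = Multiplicative.toAdd (1 : Vp p) := by rw [h5]; rfl
  exact Multiplicative.toAdd.injective h6

lemma inl_pow_eq_one (v : Vp p) : (inl v : GD p) ^ p = 1 := by
  rw [← map_pow, vp_pow_eq_one, map_one]

lemma mem_range_inl_of_pow_p (hodd : Odd p) (m : GD p) (hm : m ^ p = 1) :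
    ∃ v : Vp p, inl v = m := by
  have hr : rightHom m ^ p = 1 := by rw [← map_pow, hm, map_one]
  have h2 : p • Multiplicative.toAdd (rightHom m) = 0 := by
    rw [← toAdd_pow]
    simpa using congrArg Multiplicative.toAdd hr
  have hps : ((p : ℕ) : ZMod 2) = 1 := by
    rw [← ZMod.natCast_mod, Nat.odd_iff.mp hodd, Nat.cast_one]
  rw [nsmul_eq_mul, hps, one_mul] at h2
  have hker : rightHom m = 1 := by
    have h6 : Multiplicative.toAdd (rightHom m)
        = Multiplicative.toAdd (1 : Multiplicative (ZMod 2)) := by rw [h2]; rfl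
    exact Multiplicative.toAdd.injective h6
  have : m ∈ (inl : Vp p →* GD p).range := by
    rw [range_inl_eq_ker_rightHom]
    exact hker
  exact this

lemma phiF_mem_Hol (vw : Vp p × Vp p) : phiF p vw ∈ Hol (GD p) := by
  rcases vw with ⟨v, w⟩
  rw [phiF_apply]
  exact Subgroup.mul_mem _ (leftReg_mem_Hol _) (rreg_mem_Hol _)

lemma conj_phiF (hodd : Odd p) {g : Equiv.Perm (GD p)} (hg : g ∈ Hol (GD p)) (v w : Vp p) :
    ∃ v' w' : Vp p, g * phiF p (v, w) * g⁻¹ = phiF p (v', w') := by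
  obtain ⟨m, hm⟩ := conj_leftReg hg (inl v)
  obtain ⟨c, hc⟩ := conj_rreg hg (inl w)
  have hmp : m ^ p = 1 := by
    apply leftReg_injective
    rw [map_pow, ← hm, conj_pow, ← map_pow, inl_pow_eq_one, map_one, mul_one,
      mul_inv_cancel]
  have hcp : c ^ p = 1 := by
    apply rreg_injective
    rw [map_pow, ← hc, conj_pow, ← map_pow, inl_pow_eq_one, map_one, mul_one,
      mul_inv_cancel]
  obtain ⟨v', hv'⟩ := mem_range_inl_of_pow_p p hodd m hmp
  obtain ⟨w', hw'⟩ := mem_range_inl_of_pow_p p hodd c hcp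
  refine ⟨v', w', ?_⟩
  rw [phiF_apply, phiF_apply, hv', hw']
  calc g * (leftReg (GD p) (inl v) * rreg (GD p) (inl w)) * g⁻¹
      = (g * leftReg (GD p) (inl v) * g⁻¹) * (g * rreg (GD p) (inl w) * g⁻¹) := by group
    _ = leftReg (GD p) m * rreg (GD p) c := by rw [hm, hc]

lemma actC2_gen (v : Vp p) : actC2 p (Multiplicative.ofAdd 1) v = v⁻¹ := by
  have h1 : Multiplicative.toAdd (Multiplicative.ofAdd (1 : ZMod 2)) ≠ 0 := by decide
  show (actC2 p).toFun (Multiplicative.ofAdd 1) v = v⁻¹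
  rw [actC2]
  simp only [if_neg h1]
  rfl

lemma phiF_injective (hp : p.Prime) (hodd : Odd p) : Function.Injective (phiF p) := by
  haveI := Fact.mk hp
  rw [injective_iff_map_eq_one]
  rintro ⟨v, w⟩ h
  rw [phiF_apply] at h
  have h1 := congrArg (fun f : Equiv.Perm (GD p) => f 1) h
  simp only [Equiv.Perm.mul_apply, Equiv.Perm.one_apply, leftReg_apply, rreg_apply,
    one_mul] at h1
  -- h1 : inl v * (inl w)⁻¹ = 1
  have hvw : v = w := inl_injective (mul_inv_eq_one.mp h1)
  subst hvw
  set s : GD p := inr (Multiplicative.ofAdd (1 : ZMod 2)) with hs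
  have h2 := congrArg (fun f : Equiv.Perm (GD p) => f s) h
  simp only [Equiv.Perm.mul_apply, Equiv.Perm.one_apply, leftReg_apply, rreg_apply] at h2
  -- h2 : inl v * (s * (inl v)⁻¹) = s
  have h7 := inl_aut (φ := actC2 p) (Multiplicative.ofAdd (1 : ZMod 2)) v⁻¹
  rw [actC2_gen, inv_inv] at h7
  simp only [map_inv] at h7
  -- h7 : inl v = inr (ofAdd 1) * (inl v)⁻¹ * (inr (ofAdd 1))⁻¹
  have hss : s * (inl v)⁻¹ = inl v * s := by
    rw [hs]
    conv_rhs => rw [h7]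
    group
  rw [hss] at h2
  have h3 : (inl v : GD p) * inl v = 1 := by
    rw [← mul_assoc] at h2
    have h2' : (inl v : GD p) * inl v * s = 1 * s := by rw [one_mul]; exact h2
    exact mul_right_cancel h2'
  have h5 : v * v = 1 := inl_injective (by rw [map_mul, map_one]; exact h3)
  have h6 : v = 1 := vp_sq_eq_one p hp hodd v h5
  simp [h6, Prod.ext_iff]

/-- The cod-restriction of `phiF` to the holomorph. -/
def psiF : Vp p × Vp p →* Hol (GD p) :=
  (phiF p).codRestrict (Hol (GD p)) (phiF_mem_Hol p)

/-- The explicit `MulEquiv` regrouping four copies of `ZMod p`. -/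
def e4 : (Vp p × Vp p) ≃* Multiplicative (ZMod p × ZMod p × ZMod p × ZMod p) where
  toFun x := Multiplicative.ofAdd
    ((Multiplicative.toAdd x.1).1, (Multiplicative.toAdd x.1).2,
     (Multiplicative.toAdd x.2).1, (Multiplicative.toAdd x.2).2)
  invFun y := (Multiplicative.ofAdd ((Multiplicative.toAdd y).1, (Multiplicative.toAdd y).2.1),
    Multiplicative.ofAdd ((Multiplicative.toAdd y).2.2.1, (Multiplicative.toAdd y).2.2.2))
  left_inv x := rfl
  right_inv y := rfl
  map_mul' a b := rfl

end Main

/-- `Hol((C_p × C_p) ⋊ C_2)` contains a normal subgroup isomorphic to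
`C_p × C_p × C_p × C_p`, of order `p⁴`, contained in every Sylow `p`-subgroup. -/
theorem statement10 (p : ℕ) (hp : p.Prime) (hodd : Odd p) :
    ∃ F : Subgroup (Hol (GD p)), F.Normal ∧
      Nonempty (F ≃* Multiplicative (ZMod p × ZMod p × ZMod p × ZMod p)) ∧
      Nat.card F = p ^ 4 ∧
      ∀ P : Sylow p (Hol (GD p)), F ≤ (P : Subgroup (Hol (GD p))) := by
  haveI := Fact.mk hp
  have hinj : Function.Injective (psiF p) := by
    intro a b hab
    exact phiF_injective p hp hodd (congrArg Subtype.val hab)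
  have hnormal : (psiF p).range.Normal := by
    constructor
    rintro f ⟨⟨v, w⟩, rfl⟩ g
    obtain ⟨v', w', h⟩ := conj_phiF p hodd g.2 v w
    refine ⟨(v', w'), ?_⟩
    apply Subtype.ext
    show phiF p (v', w')
        = (g : Equiv.Perm (GD p)) * phiF p (v, w) * (g : Equiv.Perm (GD p))⁻¹
    exact h.symm
  have hcardV : Nat.card (Vp p) = p * p := by
    rw [Nat.card_congr Multiplicative.toAdd, Nat.card_prod, Nat.card_zmod]
  have hcard : Nat.card (psiF p).range = p ^ 4 := by
    rw [← Nat.card_congr (MonoidHom.ofInjective hinj).toEquiv, Nat.card_prod, hcardV]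
    ring
  refine ⟨(psiF p).range, hnormal, ⟨(MonoidHom.ofInjective hinj).symm.trans (e4 p)⟩, hcard, ?_⟩
  intro P
  have hFp : IsPGroup p (psiF p).range := IsPGroup.of_card hcard
  haveI : (psiF p).range.Normal := hnormal
  have hsup := IsPGroup.to_sup_of_normal_left hFp P.isPGroup'
  have heq := P.is_maximal' hsup le_sup_right
  calc (psiF p).range ≤ (psiF p).range ⊔ (P : Subgroup (Hol (GD p))) := le_sup_left
    _ = (P : Subgroup (Hol (GD p))) := heq
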